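/- Let d = d₁ + d₂ with d₁, d₂ ≥ 1, let μ = (μ₁, μ₂) ∈ ℝ^{d₁} × ℝ^{d₂}, let ν > 2, and let Σ be a symmetric positive definite d×d real matrix with blocks Σ₁₁, Σ₁₂, Σ₁₂ᵀ, Σ₂₂. Define, for x₂ ∈ ℝ^{d₂}, μ_{1|2}(x₂) = μ₁ + Σ₁₂ Σ₂₂⁻¹ (x₂ − μ₂) and Σ_{1|2}(x₂) = ((ν − 2 + (x₂ − μ₂)ᵀ Σ₂₂⁻¹ (x₂ − μ₂)) / (ν − 2 + d₂)) · (Σ₁₁ − Σ₁₂ Σ₂₂⁻¹ Σ₁₂ᵀ). Then Σ_{1|2}(x₂) is symmetric positive definite and for every x = (x₁, x₂) ∈ ℝ^d the joint density factorizes as t_d(x; μ, Σ, ν) = t_{d₁}(x₁; μ_{1|2}(x₂), Σ_{1|2}(x₂), ν + d₂) · t_{d₂}(x₂; μ₂, Σ₂₂, ν). -/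

import Mathlib

open MeasureTheory Matrix

/-- Normalizing constant of the Student's t density in the covariance parametrization. -/
noncomputable def tConst (d : ℕ) (ν : ℝ) : ℝ :=
  Real.Gamma ((d + ν) / 2) / (Real.sqrt (Real.pi ^ d * (ν - 2) ^ d) * Real.Gamma (ν / 2))

/-- Student's t density in the covariance parametrization. -/
noncomputable def tDens {n : Type*} [Fintype n] [DecidableEq n] (μ : n → ℝ)
    (S : Matrix n n ℝ) (ν : ℝ) (y : n → ℝ) : ℝ :=
  tConst (Fintype.card n) ν * S.det ^ (-(1 : ℝ) / 2) *
    (1 + ((y - μ) ⬝ᵥ (S⁻¹ *ᵥ (y - μ))) / (ν - 2)) ^ (-((Fintype.card n : ℝ) + ν) / 2)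



lemma tConst_pos (d : ℕ) {ν : ℝ} (hν : 2 < ν) : 0 < tConst d ν := by
  have h0 : (0:ℝ) < ν := by linarith
  have h1 : (0:ℝ) < (d + ν) / 2 := by positivity
  have h2 : (0:ℝ) < ν - 2 := by linarith
  have := Real.Gamma_pos_of_pos h1
  have := Real.Gamma_pos_of_pos (by positivity : (0:ℝ) < ν / 2)
  have : (0:ℝ) < Real.pi ^ d * (ν - 2) ^ d := by positivity
  unfold tConst
  positivity

lemma log_tConst (d : ℕ) {ν : ℝ} (hν : 2 < ν) :
    Real.log (tConst d ν) = Real.log (Real.Gamma ((d + ν) / 2))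
      - ((d : ℝ) / 2 * Real.log Real.pi + (d : ℝ) / 2 * Real.log (ν - 2))
      - Real.log (Real.Gamma (ν / 2)) := by
  have h0 : (0:ℝ) < ν := by linarith
  have h2 : (0:ℝ) < ν - 2 := by linarith
  have hpi := Real.pi_pos
  have hG1 := Real.Gamma_pos_of_pos (by positivity : (0:ℝ) < (d + ν) / 2)
  have hG2 := Real.Gamma_pos_of_pos (by positivity : (0:ℝ) < ν / 2)
  have hx : (0:ℝ) < Real.pi ^ d * (ν - 2) ^ d := by positivity
  unfold tConst
  rw [Real.log_div hG1.ne' (by positivity),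
    Real.log_mul (by positivity) hG2.ne', Real.log_sqrt hx.le,
    Real.log_mul (by positivity) (by positivity), Real.log_pow, Real.log_pow]
  ring

lemma scalar_key (d₁ d₂ : ℕ) (ν q1 q2 dD dE : ℝ) (hν : 2 < ν) (hq1 : 0 ≤ q1) (hq2 : 0 ≤ q2)
    (hdD : 0 < dD) (hdE : 0 < dE) :
    tConst (d₁ + d₂) ν * (dD * dE) ^ (-(1:ℝ)/2) *
      (1 + (q1 + q2) / (ν - 2)) ^ (-(((d₁:ℝ) + (d₂:ℝ)) + ν)/2)
    = tConst d₁ (ν + d₂) * ((((ν - 2 + q2)/(ν - 2 + d₂))^d₁ * dE) ^ (-(1:ℝ)/2)) *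
        (1 + (((ν - 2 + q2)/(ν - 2 + d₂))⁻¹ * q1) / (ν + d₂ - 2)) ^ (-((d₁:ℝ) + (ν + d₂))/2) *
      (tConst d₂ ν * dD ^ (-(1:ℝ)/2) * (1 + q2/(ν - 2)) ^ (-((d₂:ℝ) + ν)/2)) := by
  have hp : (0:ℝ) < ν - 2 := by linarith
  have hm : (0:ℝ) ≤ (d₂:ℝ) := by positivity
  have hr : (0:ℝ) < ν - 2 + q2 := by linarith
  have hs : (0:ℝ) < ν - 2 + d₂ := by linarith
  have hrq : (0:ℝ) < ν - 2 + q2 + q1 := by linarith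
  have hν2 : 2 < ν + d₂ := by linarith
  have e₁ : 1 + (q1 + q2) / (ν - 2) = (ν - 2 + q2 + q1)/(ν - 2) := by field_simp; ring
  have e₂ : 1 + (((ν - 2 + q2)/(ν - 2 + d₂))⁻¹ * q1) / (ν + d₂ - 2)
      = (ν - 2 + q2 + q1)/(ν - 2 + q2) := by
    rw [show ν + (d₂:ℝ) - 2 = ν - 2 + d₂ by ring]
    field_simp
  have e₃ : 1 + q2/(ν - 2) = (ν - 2 + q2)/(ν - 2) := by field_simp
  rw [e₁, e₂, e₃]
  have hpd := tConst_pos (d₁ + d₂) hν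
  have hpd₁ := tConst_pos d₁ hν2
  have hpd₂ := tConst_pos d₂ hν
  have hkpow : (0:ℝ) < ((ν - 2 + q2)/(ν - 2 + d₂))^d₁ := by positivity
  apply Real.log_injOn_pos (Set.mem_Ioi.mpr (by positivity)) (Set.mem_Ioi.mpr (by positivity))
  have hdDE := mul_pos hdD hdE
  have hkE := mul_pos hkpow hdE
  rw [Real.log_mul (mul_pos hpd (Real.rpow_pos_of_pos hdDE _)).ne'
        (Real.rpow_pos_of_pos (by positivity) _).ne',
      Real.log_mul hpd.ne' (Real.rpow_pos_of_pos hdDE _).ne',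
      Real.log_mul (mul_pos (mul_pos hpd₁ (Real.rpow_pos_of_pos hkE _))
          (Real.rpow_pos_of_pos (by positivity) _)).ne'
        (mul_pos (mul_pos hpd₂ (Real.rpow_pos_of_pos hdD _))
          (Real.rpow_pos_of_pos (by positivity) _)).ne',
      Real.log_mul (mul_pos hpd₁ (Real.rpow_pos_of_pos hkE _)).ne'
        (Real.rpow_pos_of_pos (by positivity) _).ne',
      Real.log_mul hpd₁.ne' (Real.rpow_pos_of_pos hkE _).ne',
      Real.log_mul (mul_pos hpd₂ (Real.rpow_pos_of_pos hdD _)).ne'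
        (Real.rpow_pos_of_pos (by positivity) _).ne',
      Real.log_mul hpd₂.ne' (Real.rpow_pos_of_pos hdD _).ne',
      Real.log_rpow hdDE, Real.log_rpow (by positivity), Real.log_rpow hkE,
      Real.log_rpow (by positivity), Real.log_rpow hdD, Real.log_rpow (by positivity),
      Real.log_mul hdD.ne' hdE.ne', Real.log_mul hkpow.ne' hdE.ne', Real.log_pow,
      Real.log_div hrq.ne' hp.ne', Real.log_div hrq.ne' hr.ne', Real.log_div hr.ne' hp.ne',
      Real.log_div hr.ne' hs.ne',
      log_tConst (d₁ + d₂) hν, log_tConst d₁ hν2, log_tConst d₂ hν,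
      show (((d₁ + d₂ : ℕ) : ℝ) + ν)/2 = ((d₁:ℝ) + (ν + (d₂:ℝ)))/2 by push_cast; ring,
      show ((d₂:ℝ) + ν)/2 = (ν + (d₂:ℝ))/2 by ring,
      show ν + (d₂:ℝ) - 2 = ν - 2 + (d₂:ℝ) by ring]
  push_cast
  ring
section aux
variable {d₁ d₂ : ℕ}

lemma block_posdef (S : Matrix (Fin d₁ ⊕ Fin d₂) (Fin d₁ ⊕ Fin d₂) ℝ) (hSsymm : S.IsSymm)
    (hSpd : S.PosDef) :
    S.toBlocks₂₂.PosDef ∧ S = fromBlocks S.toBlocks₁₁ S.toBlocks₁₂ (S.toBlocks₁₂)ᵀ S.toBlocks₂₂ := by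
  have h21 : S.toBlocks₂₁ = (S.toBlocks₁₂)ᵀ := by
    ext i j
    have := congrFun (congrFun hSsymm (Sum.inr i)) (Sum.inl j)
    simpa [toBlocks₂₁, toBlocks₁₂, transpose_apply] using this.symm
  have hS' : S = fromBlocks S.toBlocks₁₁ S.toBlocks₁₂ (S.toBlocks₁₂)ᵀ S.toBlocks₂₂ := by
    conv_lhs => rw [← fromBlocks_toBlocks S]
    rw [h21]
  refine ⟨PosDef.of_dotProduct_mulVec_pos ?_ ?_, hS'⟩
  · have hd : S.toBlocks₂₂.IsSymm := by
      ext i j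
      have := congrFun (congrFun hSsymm (Sum.inr i)) (Sum.inr j)
      simpa [toBlocks₂₂, transpose_apply] using this
    rw [IsHermitian, conjTranspose_eq_transpose_of_trivial]
    exact hd
  · intro v hv
    have hne : (Sum.elim (0 : Fin d₁ → ℝ) v) ≠ 0 := by
      intro h
      apply hv
      ext i
      exact congrFun h (Sum.inr i)
    have := hSpd.dotProduct_mulVec_pos hne
    rw [hS'] at this
    simpa [fromBlocks_mulVec, sumElim_dotProduct_sumElim] using this

end aux

section aux2
variable {d₁ d₂ : ℕ}
variable (A : Matrix (Fin d₁) (Fin d₁) ℝ) (B : Matrix (Fin d₁) (Fin d₂) ℝ)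
  (D : Matrix (Fin d₂) (Fin d₂) ℝ)

lemma schur_facts (hS : (fromBlocks A B Bᵀ D).PosDef) (hD : D.PosDef) :
    (A - B * D⁻¹ * Bᵀ).PosDef ∧
      (fromBlocks A B Bᵀ D).det = D.det * (A - B * D⁻¹ * Bᵀ).det := by
  haveI : Invertible D := hD.isUnit.invertible
  have hBt : Bᴴ = Bᵀ := conjTranspose_eq_transpose_of_trivial B
  have hpsd : (A - B * D⁻¹ * Bᵀ).PosSemidef := by
    rw [← hBt]
    exact (PosDef.fromBlocks₂₂ A B hD).mp (by rw [hBt]; exact hS.posSemidef)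
  have hdet : (fromBlocks A B Bᵀ D).det = D.det * (A - B * D⁻¹ * Bᵀ).det := by
    rw [det_fromBlocks₂₂, invOf_eq_nonsing_inv]
  have hdetE : (A - B * D⁻¹ * Bᵀ).det ≠ 0 := by
    intro h
    have := hS.det_pos
    rw [hdet, h, mul_zero] at this
    exact lt_irrefl _ this
  refine ⟨PosDef.of_dotProduct_mulVec_pos hpsd.1 (fun x hx => ?_), hdet⟩
  rcases lt_or_eq_of_le (hpsd.dotProduct_mulVec_nonneg x) with h | h
  · simpa using h
  · exfalso
    have h0 : (A - B * D⁻¹ * Bᵀ) *ᵥ x = 0 := by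
      rw [← hpsd.dotProduct_mulVec_zero_iff]
      simpa using h.symm
    apply hx
    have := congrArg (fun y => (A - B * D⁻¹ * Bᵀ)⁻¹ *ᵥ y) h0
    simpa [mulVec_mulVec, nonsing_inv_mul _ (isUnit_iff_ne_zero.mpr hdetE), one_mulVec]
      using this

end aux2

variable {d₁ d₂ : ℕ}
variable (A : Matrix (Fin d₁) (Fin d₁) ℝ) (B : Matrix (Fin d₁) (Fin d₂) ℝ)
  (D : Matrix (Fin d₂) (Fin d₂) ℝ)

lemma schur_inv (hS : (fromBlocks A B Bᵀ D).PosDef) (hD : D.PosDef)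
    (hE : (A - B * D⁻¹ * Bᵀ).PosDef) :
    (fromBlocks A B Bᵀ D)⁻¹ =
      fromBlocks (A - B * D⁻¹ * Bᵀ)⁻¹ (-((A - B * D⁻¹ * Bᵀ)⁻¹ * B * D⁻¹))
        (-(D⁻¹ * Bᵀ * (A - B * D⁻¹ * Bᵀ)⁻¹))
        (D⁻¹ + D⁻¹ * Bᵀ * (A - B * D⁻¹ * Bᵀ)⁻¹ * B * D⁻¹) := by
  haveI : Invertible D := hD.isUnit.invertible
  haveI : Invertible (fromBlocks A B Bᵀ D) := hS.isUnit.invertible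
  haveI : Invertible (A - B * ⅟D * Bᵀ) := by
    rw [invOf_eq_nonsing_inv]; exact hE.isUnit.invertible
  rw [← invOf_eq_nonsing_inv, invOf_fromBlocks₂₂_eq]
  simp only [invOf_eq_nonsing_inv]

lemma dot_shift {m n : Type*} [Fintype m] [Fintype n] (N : Matrix m n ℝ) (y : n → ℝ)
    (z : m → ℝ) : (N *ᵥ y) ⬝ᵥ z = y ⬝ᵥ (Nᵀ *ᵥ z) := by
  conv_rhs => rw [dotProduct_mulVec, vecMul_transpose]

lemma schur_quad (hS : (fromBlocks A B Bᵀ D).PosDef) (hD : D.PosDef)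
    (hE : (A - B * D⁻¹ * Bᵀ).PosDef) (u₀ : Fin d₁ → ℝ) (v : Fin d₂ → ℝ) :
    Sum.elim u₀ v ⬝ᵥ ((fromBlocks A B Bᵀ D)⁻¹ *ᵥ Sum.elim u₀ v)
      = (u₀ - B *ᵥ (D⁻¹ *ᵥ v)) ⬝ᵥ ((A - B * D⁻¹ * Bᵀ)⁻¹ *ᵥ (u₀ - B *ᵥ (D⁻¹ *ᵥ v)))
        + v ⬝ᵥ (D⁻¹ *ᵥ v) := by
  have hDi : (D⁻¹)ᵀ = D⁻¹ := by
    have := hD.1.inv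
    rw [IsHermitian, conjTranspose_eq_transpose_of_trivial] at this
    exact this
  have hEi : ((A - B * D⁻¹ * Bᵀ)⁻¹)ᵀ = (A - B * D⁻¹ * Bᵀ)⁻¹ := by
    have := hE.1.inv
    rw [IsHermitian, conjTranspose_eq_transpose_of_trivial] at this
    exact this
  rw [schur_inv A B D hS hD hE]
  simp only [fromBlocks_mulVec, sumElim_dotProduct_sumElim, add_mulVec, neg_mulVec,
    mulVec_mulVec, dotProduct_add, dotProduct_neg, dotProduct_sub, sub_dotProduct,
    mulVec_sub, Matrix.mul_assoc, Sum.elim_comp_inl, Sum.elim_comp_inr]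
  have h1 : (B * D⁻¹) *ᵥ v ⬝ᵥ (A - B * (D⁻¹ * Bᵀ))⁻¹ *ᵥ u₀
      = v ⬝ᵥ (D⁻¹ * (Bᵀ * (A - B * (D⁻¹ * Bᵀ))⁻¹)) *ᵥ u₀ := by
    rw [dot_shift, mulVec_mulVec, transpose_mul, hDi, Matrix.mul_assoc]
  have h2 : (B * D⁻¹) *ᵥ v ⬝ᵥ ((A - B * (D⁻¹ * Bᵀ))⁻¹ * (B * D⁻¹)) *ᵥ v
      = v ⬝ᵥ (D⁻¹ * (Bᵀ * ((A - B * (D⁻¹ * Bᵀ))⁻¹ * (B * D⁻¹)))) *ᵥ v := by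
    rw [dot_shift, mulVec_mulVec, transpose_mul, hDi, Matrix.mul_assoc]
  rw [h1, h2]
  ring

/-- Conditional/marginal factorization of the multivariate Student's t density: the joint
density factorizes into the conditional t density of the first block given the second one
(with ν + d₂ degrees of freedom) times the marginal t density of the second block, and the
conditional covariance matrix is symmetric positive definite. -/
theorem tDens_factorization (d₁ d₂ : ℕ) (hd₁ : 1 ≤ d₁) (hd₂ : 1 ≤ d₂)
    (μ₁ : Fin d₁ → ℝ) (μ₂ : Fin d₂ → ℝ) (ν : ℝ) (hν : 2 < ν)
    (S : Matrix (Fin d₁ ⊕ Fin d₂) (Fin d₁ ⊕ Fin d₂) ℝ) (hSsymm : S.IsSymm) (hSpd : S.PosDef) :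
    ∀ x₂ : Fin d₂ → ℝ,
      let μc : Fin d₁ → ℝ := μ₁ + S.toBlocks₁₂ *ᵥ ((S.toBlocks₂₂)⁻¹ *ᵥ (x₂ - μ₂))
      let Sc : Matrix (Fin d₁) (Fin d₁) ℝ :=
        ((ν - 2 + ((x₂ - μ₂) ⬝ᵥ ((S.toBlocks₂₂)⁻¹ *ᵥ (x₂ - μ₂)))) / (ν - 2 + (d₂ : ℝ))) •
          (S.toBlocks₁₁ - S.toBlocks₁₂ * (S.toBlocks₂₂)⁻¹ * (S.toBlocks₁₂)ᵀ)
      Sc.IsSymm ∧ Sc.PosDef ∧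
        ∀ x₁ : Fin d₁ → ℝ,
          tDens (Sum.elim μ₁ μ₂) S ν (Sum.elim x₁ x₂)
            = tDens μc Sc (ν + (d₂ : ℝ)) x₁ * tDens μ₂ S.toBlocks₂₂ ν x₂ := by
  intro x₂ μc Sc
  obtain ⟨hD, hS'⟩ := block_posdef S hSsymm hSpd
  have hSfb : (fromBlocks S.toBlocks₁₁ S.toBlocks₁₂ (S.toBlocks₁₂)ᵀ S.toBlocks₂₂).PosDef :=
    hS' ▸ hSpd
  obtain ⟨hE, hdet⟩ := schur_facts _ _ _ hSfb hD
  set A := S.toBlocks₁₁ with hA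
  set B := S.toBlocks₁₂ with hB
  set D := S.toBlocks₂₂ with hDdef
  set E := A - B * D⁻¹ * Bᵀ with hEdef
  set v := x₂ - μ₂ with hv
  set q2 := v ⬝ᵥ (D⁻¹ *ᵥ v) with hq2def
  have hq2 : 0 ≤ q2 := by
    have := hD.inv.posSemidef.dotProduct_mulVec_nonneg v
    simpa [hq2def] using this
  set k := (ν - 2 + q2) / (ν - 2 + (d₂ : ℝ)) with hk
  have hd₂0 : (0:ℝ) ≤ (d₂:ℝ) := Nat.cast_nonneg _
  have hk0 : 0 < k := div_pos (by linarith) (by linarith)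
  have hSc : Sc = k • E := rfl
  have hEsymmT : Eᵀ = E := by
    have := hE.1
    rwa [IsHermitian, conjTranspose_eq_transpose_of_trivial] at this
  have hScSymm : Sc.IsSymm := by
    rw [hSc]
    show (k • E)ᵀ = k • E
    rw [transpose_smul, hEsymmT]
  have hScPd : Sc.PosDef := by
    rw [hSc]
    refine PosDef.of_dotProduct_mulVec_pos ?_ (fun x hx => ?_)
    · rw [IsHermitian, conjTranspose_eq_transpose_of_trivial, transpose_smul, hEsymmT]
    · have := hE.dotProduct_mulVec_pos hx
      simp only [smul_mulVec, dotProduct_smul, smul_eq_mul, star_trivial]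
      exact mul_pos hk0 (by simpa using this)
  refine ⟨hScSymm, hScPd, fun x₁ => ?_⟩
  have hEdet : IsUnit E.det := isUnit_iff_ne_zero.mpr hE.det_pos.ne'
  have hScInv : Sc⁻¹ = k⁻¹ • E⁻¹ := by
    rw [hSc]
    apply inv_eq_left_inv
    rw [smul_mul_smul_comm, nonsing_inv_mul _ hEdet, inv_mul_cancel₀ hk0.ne', one_smul]
  have hu : Sum.elim x₁ x₂ - Sum.elim μ₁ μ₂ = Sum.elim (x₁ - μ₁) v := by
    funext i; cases i <;> simp [hv]
  have humc : x₁ - μc = (x₁ - μ₁) - B *ᵥ (D⁻¹ *ᵥ v) := by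
    funext i
    simp [μc, hv]
    ring
  set u := (x₁ - μ₁) - B *ᵥ (D⁻¹ *ᵥ v) with huu
  set q1 := u ⬝ᵥ (E⁻¹ *ᵥ u) with hq1def
  have hq1 : 0 ≤ q1 := by simpa using hE.inv.posSemidef.dotProduct_mulVec_nonneg u
  have hquad : (Sum.elim x₁ x₂ - Sum.elim μ₁ μ₂) ⬝ᵥ (S⁻¹ *ᵥ (Sum.elim x₁ x₂ - Sum.elim μ₁ μ₂))
      = q1 + q2 := by
    rw [hu, hS', schur_quad _ _ _ hSfb hD hE]
  have hcquad : (x₁ - μc) ⬝ᵥ (Sc⁻¹ *ᵥ (x₁ - μc)) = k⁻¹ * q1 := by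
    rw [humc, hScInv]
    simp [smul_mulVec, dotProduct_smul, smul_eq_mul, ← hq1def]
  have hSdet : S.det = D.det * E.det := by rw [hS', hdet]
  have hScdet : Sc.det = k ^ d₁ * E.det := by
    rw [hSc, det_smul, Fintype.card_fin]
  simp only [tDens, Fintype.card_sum, Fintype.card_fin]
  rw [hquad, hcquad, hSdet, hScdet, ← hv, ← hq2def, hk]
  push_cast
  exact scalar_key d₁ d₂ ν q1 q2 D.det E.det hν hq1 hq2 hD.det_pos hE.det_pos
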